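/- arXiv:1708.08379 — 2 statements merged into one kernel-verified Lean document; each statement's English description precedes it below -/
import Mathlib

section
/- Let H be a real Hilbert space and ℓ_1, …, ℓ_n continuous linearly independent linear functionals on H, with V₁ = ⋂_{j=1}^n ker ℓ_j, and let ψ_1, …, ψ_n ∈ V₁^⊥ satisfy ℓ_j(ψ_k) = δ_{jk}. Let g be a continuous linear functional on H, let u ∈ H be the unique element with ⟨u, v⟩ = g(v) for all v ∈ H, and let u_ms ∈ span{ψ_1, …, ψ_n} be the unique element with ⟨u_ms, ψ_k⟩ = g(ψ_k) for all k. Then ℓ_k(u_ms) = ℓ_k(u) for every k = 1, …, n; that is, the degrees of freedom of the coarse (Galerkin) solution coincide exactly with the constraint values (average pressures) of the exact fine-scale solution. -/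
open scoped InnerProductSpace

/-- The degrees of freedom of the coarse Galerkin solution `u_ms` coincide with the
constraint values (average pressures) of the exact fine-scale solution `u`:
`ℓ k u_ms = ℓ k u` for all `k`. -/
theorem coarse_dofs_equal_fine_averages
    {H : Type*} [NormedAddCommGroup H] [InnerProductSpace ℝ H] [CompleteSpace H]
    {n : ℕ} (ℓ : Fin n → H →L[ℝ] ℝ) (hli : LinearIndependent ℝ ℓ)
    (V₁ : Submodule ℝ H) (hV₁ : V₁ = ⨅ j, LinearMap.ker (ℓ j : H →ₗ[ℝ] ℝ))
    (ψ : Fin n → H) (hψmem : ∀ k, ψ k ∈ V₁ᗮ)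
    (hδ : ∀ j k, ℓ j (ψ k) = if j = k then 1 else 0)
    (g : H →L[ℝ] ℝ)
    (u : H) (hu : ∀ v : H, ⟪u, v⟫_ℝ = g v)
    (u_ms : H) (hms_mem : u_ms ∈ Submodule.span ℝ (Set.range ψ))
    (hms : ∀ k, ⟪u_ms, ψ k⟫_ℝ = g (ψ k)) :
    ∀ k, ℓ k u_ms = ℓ k u := by
  -- The error w := u_ms - u is orthogonal to every ψ j (Galerkin orthogonality).
  have hw : ∀ j, ⟪u_ms - u, ψ j⟫_ℝ = 0 := by
    intro j
    rw [inner_sub_left, hms, hu]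
    ring
  -- V₁ is a closed subspace.
  have hclosed : IsClosed (V₁ : Set H) := by
    rw [hV₁, Submodule.coe_iInf]
    exact isClosed_iInter fun j => ContinuousLinearMap.isClosed_ker (ℓ j)
  haveI : CompleteSpace V₁ := hclosed.completeSpace_coe
  -- Orthogonal decomposition of w.
  obtain ⟨y, hy, z, hz, hyz⟩ := V₁.exists_add_mem_mem_orthogonal (u_ms - u)
  -- z is also orthogonal to every ψ j.
  have hzψ : ∀ j, ⟪z, ψ j⟫_ℝ = 0 := by
    intro j
    have h1 : ⟪y, ψ j⟫_ℝ = 0 :=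
      Submodule.inner_right_of_mem_orthogonal hy (hψmem j)
    have := hw j
    rw [hyz, inner_add_left, h1, zero_add] at this
    exact this
  -- z' := z - ∑ j, ℓ j z • ψ j lies in both V₁ and V₁ᗮ, hence is 0.
  set z' : H := z - ∑ j, ℓ j z • ψ j with hz'def
  have hz'V₁ : z' ∈ V₁ := by
    rw [hV₁, Submodule.mem_iInf]
    intro k
    rw [LinearMap.mem_ker]
    have : (ℓ k) z' = ℓ k z - ∑ j, ℓ j z * ℓ k (ψ j) := by
      simp [hz'def, mul_comm]
    rw [ContinuousLinearMap.coe_coe, this]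
    have hsum : ∑ j, ℓ j z * ℓ k (ψ j) = ℓ k z := by
      rw [Finset.sum_eq_single k]
      · rw [hδ k k]; simp
      · intro j _ hj; rw [hδ k j]; simp [Ne.symm hj]
      · simp
    rw [hsum, sub_self]
  have hz'perp : z' ∈ V₁ᗮ := by
    exact Submodule.sub_mem _ hz (Submodule.sum_mem _ fun j _ =>
      Submodule.smul_mem _ _ (hψmem j))
  have hz'0 : z' = 0 := by
    have := V₁.orthogonal_disjoint.eq_bot
    have : z' ∈ V₁ ⊓ V₁ᗮ := ⟨hz'V₁, hz'perp⟩
    rwa [V₁.orthogonal_disjoint.eq_bot, Submodule.mem_bot] at this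
  -- Hence z = ∑ j, ℓ j z • ψ j, and orthogonality to each ψ j forces z = 0.
  have hzeq : z = ∑ j, ℓ j z • ψ j := by
    have := sub_eq_zero.mp hz'0
    exact this
  have hz0 : z = 0 := by
    have : ⟪z, z⟫_ℝ = 0 := by
      nth_rewrite 2 [hzeq]
      rw [inner_sum]
      exact Finset.sum_eq_zero fun j _ => by rw [real_inner_smul_right, hzψ j, mul_zero]
    exact inner_self_eq_zero.mp (by rw [real_inner_comm] at this; exact this)
  -- Therefore u_ms - u = y ∈ V₁, so every ℓ k vanishes on it.
  have hwV₁ : u_ms - u ∈ V₁ := by rw [hyz, hz0, add_zero]; exact hy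
  intro k
  have : ℓ k (u_ms - u) = 0 := by
    rw [hV₁, Submodule.mem_iInf] at hwV₁
    exact hwV₁ k
  have := this
  rw [map_sub] at this
  linarith
end

section
/- Let H be a real Hilbert space and ℓ_1, …, ℓ_n continuous linearly independent linear functionals on H, with V₁ = ⋂_{j=1}^n ker ℓ_j, and let ψ_1, …, ψ_n ∈ V₁^⊥ satisfy ℓ_j(ψ_k) = δ_{jk}. Let g be a continuous linear functional on H and let u ∈ H satisfy ⟨u, v⟩ = g(v) for all v ∈ H. Define T_{jk} = ⟨ψ_j, ψ_k⟩ and c ∈ ℝ^n by c_j = ℓ_j(u). Then for every k = 1, …, n, Σ_{j=1}^n T_{kj} c_j = g(ψ_k); that is, the vector of exact average values of the fine-scale solution solves the upscaled linear system with transmissibility matrix T and right-hand side (g(ψ_k))_k. -/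
open scoped InnerProductSpace

/-- The vector `c_j = ℓ_j(u)` of exact average values of the fine-scale solution solves
the upscaled linear system with transmissibility matrix `T_{jk} = ⟪ψ_j, ψ_k⟫` and
right-hand side `(g(ψ_k))_k`: for every `k`, `Σ_j T_{kj} c_j = g(ψ_k)`. -/
theorem exact_averages_solve_upscaled_system
    {H : Type*} [NormedAddCommGroup H] [InnerProductSpace ℝ H] [CompleteSpace H]
    {n : ℕ} (ℓ : Fin n → H →L[ℝ] ℝ) (hli : LinearIndependent ℝ ℓ)
    (V₁ : Submodule ℝ H) (hV₁ : V₁ = ⨅ j, LinearMap.ker (ℓ j : H →ₗ[ℝ] ℝ))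
    (ψ : Fin n → H) (hψmem : ∀ k, ψ k ∈ V₁ᗮ)
    (hδ : ∀ j k, ℓ j (ψ k) = if j = k then 1 else 0)
    (g : H →L[ℝ] ℝ)
    (u : H) (hu : ∀ v : H, ⟪u, v⟫_ℝ = g v)
    (T : Matrix (Fin n) (Fin n) ℝ) (hT : ∀ j k, T j k = ⟪ψ j, ψ k⟫_ℝ)
    (c : Fin n → ℝ) (hc : ∀ j, c j = ℓ j u) :
    ∀ k, ∑ j, T k j * c j = g (ψ k) := by
  have hclosed : IsClosed (V₁ : Set H) := by
    rw [hV₁]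
    have : ((⨅ j, LinearMap.ker (ℓ j : H →ₗ[ℝ] ℝ) : Submodule ℝ H) : Set H)
        = ⋂ j, (LinearMap.ker (ℓ j : H →ₗ[ℝ] ℝ) : Set H) := by
      simp [Submodule.coe_iInf]
    rw [this]
    exact isClosed_iInter fun j => ContinuousLinearMap.isClosed_ker (ℓ j)
  haveI : CompleteSpace V₁ := hclosed.completeSpace_coe
  have horth : V₁ᗮᗮ = V₁ := Submodule.orthogonal_orthogonal V₁
  set P : H := (V₁ᗮ.orthogonalProjectionOnto u : H) with hP
  have hsub : u - P ∈ V₁ := horth ▸ (Submodule.sub_starProjection_mem_orthogonal (K := V₁ᗮ) u : u - P ∈ V₁ᗮᗮ)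
  have hker : ∀ j, ℓ j (u - P) = 0 := by
    intro j
    have := hsub
    rw [hV₁, Submodule.mem_iInf] at this
    exact this j
  -- w := P - Σ c_j ψ_j is in V₁ ∩ V₁ᗮ, hence 0
  have hPmem : P ∈ V₁ᗮ := (V₁ᗮ.orthogonalProjectionOnto u).2
  have hwmem : P - ∑ j, c j • ψ j ∈ V₁ᗮ :=
    Submodule.sub_mem _ hPmem (Submodule.sum_mem _ fun j _ => Submodule.smul_mem _ _ (hψmem j))
  have hwV₁ : P - ∑ j, c j • ψ j ∈ V₁ := by
    rw [hV₁, Submodule.mem_iInf]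
    intro j
    rw [LinearMap.mem_ker]
    have h1 : ℓ j P = c j := by
      have := hker j
      rw [map_sub] at this
      have h2 : ℓ j u = c j := (hc j).symm
      linarith
    have h3 : ℓ j (∑ i, c i • ψ i) = c j := by
      rw [map_sum]
      simp only [map_smul, hδ, smul_eq_mul]
      simp [Finset.sum_ite_eq' Finset.univ j fun i => c i]
    rw [ContinuousLinearMap.coe_coe, map_sub, h1, h3, sub_self]
  have hw0 : P - ∑ j, c j • ψ j = 0 := by
    have := (Submodule.mem_orthogonal V₁ _).mp hwmem _ hwV₁
    rwa [inner_self_eq_zero] at this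
  have hPeq : P = ∑ j, c j • ψ j := by
    have := sub_eq_zero.mp hw0; exact this
  intro k
  have h0 : ⟪u - P, ψ k⟫_ℝ = 0 :=
    (Submodule.mem_orthogonal V₁ (ψ k)).mp (hψmem k) _ hsub
  calc ∑ j, T k j * c j = ⟪∑ j, c j • ψ j, ψ k⟫_ℝ := by
        rw [sum_inner]
        refine Finset.sum_congr rfl fun j _ => ?_
        rw [real_inner_smul_left, hT, real_inner_comm]; ring
    _ = ⟪P, ψ k⟫_ℝ := by rw [hPeq]
    _ = ⟪u, ψ k⟫_ℝ := by
        have : ⟪u, ψ k⟫_ℝ = ⟪u - P, ψ k⟫_ℝ + ⟪P, ψ k⟫_ℝ := by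
          rw [← inner_add_left, sub_add_cancel]
        rw [this, h0, zero_add]
    _ = g (ψ k) := hu (ψ k)
end
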